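/- Let 1 ≤ k < n and let S = {(a b) : a ∈ [k], b ∈ [n] \ [k]} be the set of all transpositions in S_n swapping an element of the first k points with an element of the remaining n−k points. Then every real eigenvalue of the adjacency matrix of the Cayley graph Γ(S_n, S) is an integer. -/

import Mathlib

open Matrix

variable {V : Type*} [Fintype V] [DecidableEq V]

lemma spec_iff_eig {M : Matrix V V ℝ} {μ : ℝ} :
    μ ∈ spectrum ℝ M ↔ ∃ v : V → ℝ, v ≠ 0 ∧ M.mulVec v = μ • v := by
  rw [← AlgEquiv.spectrum_eq (Matrix.toLinAlgEquiv' (R := ℝ) (n := V)) M,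
    ← Module.End.hasEigenvalue_iff_mem_spectrum]
  constructor
  · intro h
    obtain ⟨v, hv⟩ := h.exists_hasEigenvector
    exact ⟨v, hv.2, by simpa [Matrix.toLinAlgEquiv'_apply, Matrix.toLin'_apply] using
      (Module.End.mem_eigenspace_iff.mp hv.1)⟩
  · rintro ⟨v, hv0, hv⟩
    exact Module.End.hasEigenvalue_of_hasEigenvector
      ⟨Module.End.mem_eigenspace_iff.mpr (by simpa [Matrix.toLinAlgEquiv'_apply,
        Matrix.toLin'_apply] using hv), hv0⟩

/-- joint eigenvector for a symmetric matrix commuting with M, inside an eigenspace of M -/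
lemma joint_eig {X M : Matrix V V ℝ} (hX : Xᵀ = X) (hc : X * M = M * X) {μ : ℝ}
    (hμ : μ ∈ spectrum ℝ M) :
    ∃ (a : ℝ) (v : V → ℝ), v ≠ 0 ∧ X.mulVec v = a • v ∧ M.mulVec v = μ • v := by
  obtain ⟨v₀, hv₀, hMv₀⟩ := spec_iff_eig.mp hμ
  classical
  let f := Matrix.toEuclideanLin M
  let T := Matrix.toEuclideanLin X
  have key : ∀ (A B : Matrix V V ℝ) (x : EuclideanSpace ℝ V),
      Matrix.toEuclideanLin (A * B) x = Matrix.toEuclideanLin A (Matrix.toEuclideanLin B x) := by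
    intro A B x
    simp only [Matrix.toEuclideanLin_apply, Equiv.apply_symm_apply, Matrix.mulVec_mulVec]
  have hcomm : ∀ x : EuclideanSpace ℝ V, T (f x) = f (T x) := by
    intro x
    rw [← key X M, ← key M X, hc]
  have hv₀E : ((WithLp.equiv 2 (V → ℝ)).symm v₀) ∈ Module.End.eigenspace f μ := by
    rw [Module.End.mem_eigenspace_iff]
    show Matrix.toEuclideanLin M ((WithLp.equiv 2 (V → ℝ)).symm v₀) = _
    exact congrArg (WithLp.toLp 2) hMv₀
  set E := Module.End.eigenspace f μ with hE
  have hEne : E ≠ ⊥ := by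
    intro h
    rw [h, Submodule.mem_bot] at hv₀E
    apply hv₀
    have := congrArg (WithLp.equiv 2 (V → ℝ)) hv₀E
    simpa using this
  have hinv : ∀ x ∈ E, T x ∈ E := by
    intro x hx
    have hx' : f x = μ • x := Module.End.mem_eigenspace_iff.mp hx
    exact Module.End.mem_eigenspace_iff.mpr (by rw [← hcomm, hx', _root_.map_smul])
  have hherm : X.IsHermitian := by
    rw [Matrix.IsHermitian, Matrix.conjTranspose_eq_transpose_of_trivial, hX]
  have hsym : T.IsSymmetric := Matrix.isHermitian_iff_isSymmetric.mp hherm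
  have hφ : (T.restrict hinv).IsSymmetric := hsym.restrict_invariant hinv
  haveI : Nontrivial E := Submodule.nontrivial_iff_ne_bot.mpr hEne
  obtain ⟨a, hev⟩ : ∃ a : ℝ, Module.End.HasEigenvalue (T.restrict hinv) a :=
    ⟨_, hφ.hasEigenvalue_iSup_of_finiteDimensional⟩
  obtain ⟨x, hx⟩ := hev.exists_hasEigenvector
  have hxe : (T.restrict hinv) x = a • x := hx.apply_eq_smul
  have hxE : (x : EuclideanSpace ℝ V) ∈ E := x.2
  refine ⟨a, WithLp.equiv 2 (V → ℝ) (x : EuclideanSpace ℝ V), ?_, ?_, ?_⟩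
  · intro h
    apply hx.2
    have : (x : EuclideanSpace ℝ V) = 0 := by
      have := congrArg (WithLp.equiv 2 (V → ℝ)).symm h
      simpa using this
    exact Subtype.ext this
  · have : T (x : EuclideanSpace ℝ V) = a • (x : EuclideanSpace ℝ V) := by
      have := congrArg (Subtype.val) hxe
      simpa [LinearMap.restrict_coe_apply] using this
    have := congrArg (WithLp.equiv 2 (V → ℝ)) this
    exact this
  · have hxE' : f (x : EuclideanSpace ℝ V) = μ • (x : EuclideanSpace ℝ V) :=
      Module.End.mem_eigenspace_iff.mp hxE
    have := congrArg (WithLp.equiv 2 (V → ℝ)) hxE'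
    exact this

def IntSpec (M : Matrix V V ℝ) : Prop := ∀ μ ∈ spectrum ℝ M, ∃ m : ℤ, μ = m

lemma intSpec_zero : IntSpec (0 : Matrix V V ℝ) := by
  intro μ hμ
  obtain ⟨v, hv0, hv⟩ := spec_iff_eig.mp hμ
  rw [Matrix.zero_mulVec] at hv
  rcases smul_eq_zero.mp hv.symm with h | h
  · exact ⟨0, by simp [h]⟩
  · exact absurd h hv0

lemma intSpec_neg {M : Matrix V V ℝ} (h : IntSpec M) : IntSpec (-M) := by
  intro μ hμ
  obtain ⟨v, hv0, hv⟩ := spec_iff_eig.mp hμ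
  have : M.mulVec v = (-μ) • v := by
    rw [Matrix.neg_mulVec] at hv
    have := congrArg Neg.neg hv
    simpa [neg_smul] using this
  obtain ⟨m, hm⟩ := h (-μ) (spec_iff_eig.mpr ⟨v, hv0, this⟩)
  exact ⟨-m, by push_cast; linarith⟩

lemma intSpec_add {A B : Matrix V V ℝ} (hA : Aᵀ = A) (hAB : A * B = B * A)
    (hsA : IntSpec A) (hsB : IntSpec B) : IntSpec (A + B) := by
  intro μ hμ
  have hc : A * (A + B) = (A + B) * A := by
    rw [Matrix.mul_add, Matrix.add_mul, hAB]
  obtain ⟨a, v, hv0, hAv, hMv⟩ := joint_eig hA hc hμ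
  have hBv : B.mulVec v = (μ - a) • v := by
    have : A.mulVec v + B.mulVec v = μ • v := by
      rw [← Matrix.add_mulVec, hMv]
    rw [hAv] at this
    have := congrArg (fun y => y - a • v) this
    simpa [sub_smul, add_sub_cancel_left] using this
  obtain ⟨ma, hma⟩ := hsA a (spec_iff_eig.mpr ⟨v, hv0, hAv⟩)
  obtain ⟨mb, hmb⟩ := hsB (μ - a) (spec_iff_eig.mpr ⟨v, hv0, hBv⟩)
  exact ⟨ma + mb, by push_cast; linarith⟩

lemma intSpec_sum {ι : Type*} (s : Finset ι) (f : ι → Matrix V V ℝ)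
    (hsym : ∀ i ∈ s, (f i)ᵀ = f i)
    (hcomm : ∀ i ∈ s, ∀ j ∈ s, f i * f j = f j * f i)
    (hspec : ∀ i ∈ s, IntSpec (f i)) : IntSpec (∑ i ∈ s, f i) := by
  classical
  induction s using Finset.induction_on with
  | empty => simpa using intSpec_zero
  | @insert a s hnot ih =>
    rw [Finset.sum_insert hnot]
    refine intSpec_add (hsym a (Finset.mem_insert_self a s)) ?_
      (hspec a (Finset.mem_insert_self a s)) ?_
    · rw [Finset.mul_sum, Finset.sum_mul]
      refine Finset.sum_congr rfl fun j hj => ?_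
      exact hcomm a (Finset.mem_insert_self a s) j (Finset.mem_insert_of_mem hj)
    · exact ih (fun i hi => hsym i (Finset.mem_insert_of_mem hi))
        (fun i hi j hj => hcomm i (Finset.mem_insert_of_mem hi) j (Finset.mem_insert_of_mem hj))
        (fun i hi => hspec i (Finset.mem_insert_of_mem hi))

/-- The Jucys–Murphy induction step. -/
lemma intSpec_step {Y S M : Matrix V V ℝ} (hYt : Yᵀ = Y)
    (hM : M = S * Y * S + S) (hS : S * S = 1)
    (hcomm : Y * M = M * Y) (hspec : IntSpec Y) : IntSpec M := by
  intro μ hμ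
  obtain ⟨a, v, hv0, hYv, hMv⟩ := joint_eig hYt hcomm hμ
  obtain ⟨ma, hma⟩ := hspec a (spec_iff_eig.mpr ⟨v, hv0, hYv⟩)
  set w := S.mulVec v with hw
  have hSw : S.mulVec w = v := by
    rw [hw, Matrix.mulVec_mulVec, hS, Matrix.one_mulVec]
  have hYeq : Y = S * M * S - S := by
    rw [hM]
    rw [Matrix.mul_add, Matrix.add_mul, ← Matrix.mul_assoc, ← Matrix.mul_assoc]
    rw [Matrix.mul_assoc (S*S*Y), hS, one_mul, Matrix.mul_one]
    simp
  have hYw : Y.mulVec w = μ • w - v := by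
    have h1 : (S * M * S) *ᵥ w = μ • w := by
      rw [← Matrix.mulVec_mulVec, ← Matrix.mulVec_mulVec, hSw, hMv, Matrix.mulVec_smul, ← hw]
    rw [hYeq, Matrix.sub_mulVec, h1, hSw]
  set u := v + (a - μ) • w with hu
  have hYu : Y.mulVec u = μ • u := by
    rw [hu, Matrix.mulVec_add, Matrix.mulVec_smul, hYv, hYw]
    rw [smul_sub, smul_smul]
    rw [smul_add, smul_smul]
    ext i
    simp only [Pi.add_apply, Pi.sub_apply, Pi.smul_apply, smul_eq_mul]
    ring
  by_cases hu0 : u = 0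
  · -- v = (μ - a) • w , and S is an involution: (μ-a)^2 = 1
    have hvw : v = (μ - a) • w := by
      have h0 : v + (a - μ) • w = 0 := by rw [← hu, hu0]
      have h1 := eq_neg_of_add_eq_zero_left h0
      rw [h1, ← neg_smul, neg_sub]
    have hSv : S.mulVec v = (μ - a) • v := by
      rw [hvw, Matrix.mulVec_smul, hSw, ← hvw]
    have hv2 : v = ((μ - a) * (μ - a)) • v := by
      conv_lhs => rw [hvw, hw, hSv]
      rw [smul_smul]
    have hsq : (μ - a) * (μ - a) = 1 := by
      by_contra hne
      apply hv0
      have : (((μ - a) * (μ - a)) - 1) • v = 0 := by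
        rw [sub_smul, one_smul, ← hv2, sub_self]
      rcases smul_eq_zero.mp this with h | h
      · exact absurd (by linarith [sub_eq_zero.mp h]) hne
      · exact h
    rcases mul_self_eq_one_iff.mp hsq with h | h
    · exact ⟨ma + 1, by push_cast; linarith⟩
    · exact ⟨ma - 1, by push_cast; linarith⟩
  · obtain ⟨m, hm⟩ := hspec μ (spec_iff_eig.mpr ⟨u, hu0, hYu⟩)
    exact ⟨m, hm⟩

section Perm

open Equiv

variable {n : ℕ}

/-- permutation matrix of left multiplication by `g` on the group `Perm (Fin n)` -/
noncomputable def Lm (g : Perm (Fin n)) : Matrix (Perm (Fin n)) (Perm (Fin n)) ℝ :=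
  Matrix.of fun u v => if u = g * v then 1 else 0

lemma Lm_mul (g h : Perm (Fin n)) : Lm g * Lm h = Lm (g * h) := by
  classical
  ext u v
  simp only [Matrix.mul_apply, Lm, Matrix.of_apply]
  rw [Finset.sum_eq_single (h * v)
    (fun w _ hw => by simp [if_neg hw])
    (fun hmem => absurd (Finset.mem_univ _) hmem)]
  simp [mul_assoc]

lemma Lm_one : Lm (1 : Perm (Fin n)) = 1 := by
  ext u v
  simp [Lm, Matrix.one_apply, eq_comm]

lemma Lm_transpose (g : Perm (Fin n)) : (Lm g)ᵀ = Lm g⁻¹ := by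
  ext u v
  simp only [Matrix.transpose_apply, Lm, Matrix.of_apply]
  congr 1
  simp only [eq_iff_iff]
  constructor
  · intro h; rw [h]; simp
  · intro h; rw [h]; simp

/-- transposition of naturals `i j`, as a permutation of `Fin n` (junk value `1` out of range) -/
def sw (n i j : ℕ) : Perm (Fin n) :=
  if h : i < n ∧ j < n then Equiv.swap ⟨i, h.1⟩ ⟨j, h.2⟩ else 1

lemma sw_eq {i j : ℕ} (hi : i < n) (hj : j < n) : sw n i j = Equiv.swap ⟨i, hi⟩ ⟨j, hj⟩ := by
  rw [sw, dif_pos ⟨hi, hj⟩]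

lemma sw_coe (i j : Fin n) : sw n (i : ℕ) (j : ℕ) = Equiv.swap i j := by
  rw [sw_eq i.2 j.2]

lemma sw_mul_self (i j : ℕ) : sw n i j * sw n i j = 1 := by
  rw [sw]
  split_ifs with h
  · exact Equiv.swap_mul_self _ _
  · simp

lemma sw_inv (i j : ℕ) : (sw n i j)⁻¹ = sw n i j := by
  rw [sw]
  split_ifs with h
  · exact Equiv.swap_inv _ _
  · simp

/-- generalized Jucys–Murphy element (with lower cutoff `c`) as a matrix -/
noncomputable def JM (n : ℕ) (c j : ℕ) : Matrix (Perm (Fin n)) (Perm (Fin n)) ℝ :=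
  ∑ i : Fin n, if c ≤ (i : ℕ) ∧ (i : ℕ) < j then Lm (sw n (i : ℕ) j) else 0

lemma JM_transpose (c j : ℕ) : (JM n c j)ᵀ = JM n c j := by
  rw [JM, Matrix.transpose_sum]
  refine Finset.sum_congr rfl fun i _ => ?_
  split_ifs with h
  · rw [Lm_transpose, sw_inv]
  · simp

lemma JM_eq_zero {c j : ℕ} (h : j ≤ c) : JM n c j = 0 := by
  rw [JM]
  refine Finset.sum_eq_zero fun i _ => ?_
  rw [if_neg]
  omega

end Perm

section Perm2

open Equiv

variable {n : ℕ}

lemma mul_swap_eq (σ : Perm (Fin n)) (x y : Fin n) :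
    σ * Equiv.swap x y = Equiv.swap (σ x) (σ y) * σ := by
  rw [Equiv.swap_apply_apply]
  group

lemma JM_mul_right (c j : ℕ) (A : Matrix (Perm (Fin n)) (Perm (Fin n)) ℝ) :
    JM n c j * A = ∑ i : Fin n, if c ≤ (i : ℕ) ∧ (i : ℕ) < j then Lm (sw n (i : ℕ) j) * A else 0 := by
  rw [JM, Finset.sum_mul]
  exact Finset.sum_congr rfl fun i _ => by rw [ite_mul, zero_mul]

lemma JM_mul_left (c j : ℕ) (A : Matrix (Perm (Fin n)) (Perm (Fin n)) ℝ) :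
    A * JM n c j = ∑ i : Fin n, if c ≤ (i : ℕ) ∧ (i : ℕ) < j then A * Lm (sw n (i : ℕ) j) else 0 := by
  rw [JM, Finset.mul_sum]
  exact Finset.sum_congr rfl fun i _ => by rw [mul_ite, mul_zero]

lemma Lm_comm_JM {c l : ℕ} (hl : l < n) (σ : Perm (Fin n)) (hσl : σ ⟨l, hl⟩ = ⟨l, hl⟩)
    (hσ : ∀ i : Fin n, (c ≤ (i : ℕ) ∧ (i : ℕ) < l) ↔ (c ≤ ((σ i : Fin n) : ℕ) ∧ ((σ i : Fin n) : ℕ) < l)) :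
    Lm σ * JM n c l = JM n c l * Lm σ := by
  rw [JM, Finset.mul_sum, Finset.sum_mul]
  have key : ∀ i : Fin n,
      (Lm σ * if c ≤ (i : ℕ) ∧ (i : ℕ) < l then Lm (sw n (i : ℕ) l) else 0)
      = (fun j : Fin n =>
          (if c ≤ (j : ℕ) ∧ (j : ℕ) < l then Lm (sw n (j : ℕ) l) else 0) * Lm σ) (σ i) := by
    intro i
    by_cases h : c ≤ (i : ℕ) ∧ (i : ℕ) < l
    · simp only [if_pos h, if_pos ((hσ i).mp h)]
      rw [sw_eq i.2 hl, sw_eq (σ i).2 hl, Fin.eta, Fin.eta, Lm_mul, Lm_mul,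
        mul_swap_eq σ i ⟨l, hl⟩, hσl]
    · simp only [if_neg h, if_neg (fun hc => h ((hσ i).mpr hc)), mul_zero, zero_mul]
  have hre := Equiv.sum_comp σ (fun j : Fin n =>
    (if c ≤ (j : ℕ) ∧ (j : ℕ) < l then Lm (sw n (j : ℕ) l) else 0) * Lm σ)
  rw [← hre]
  exact Finset.sum_congr rfl (fun i _ => key i)

lemma JM_comm {c j l : ℕ} (hjl : j ≤ l) (hl : l < n) :
    JM n c j * JM n c l = JM n c l * JM n c j := by
  rcases eq_or_lt_of_le hjl with rfl | hlt
  · rfl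
  have hj : j < n := lt_trans hlt hl
  rw [JM_mul_right c j (JM n c l), JM_mul_left c j (JM n c l)]
  refine Finset.sum_congr rfl fun i _ => ?_
  by_cases h : c ≤ (i : ℕ) ∧ (i : ℕ) < j
  · rw [if_pos h, if_pos h]
    have hσeq : sw n (i : ℕ) j = Equiv.swap i ⟨j, hj⟩ := by rw [sw_eq i.2 hj, Fin.eta]
    refine Lm_comm_JM hl (sw n (i : ℕ) j) ?_ ?_
    · rw [hσeq]
      refine Equiv.swap_apply_of_ne_of_ne ?_ ?_
      · exact fun hc => by have := congrArg Fin.val hc; simp at this; omega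
      · exact fun hc => by have := congrArg Fin.val hc; simp at this; omega
    · intro m
      by_cases h1 : m = i
      · subst h1
        rw [hσeq, Equiv.swap_apply_left]
        simp only [Fin.val_mk]
        omega
      · by_cases h2 : m = ⟨j, hj⟩
        · subst h2
          rw [hσeq, Equiv.swap_apply_right]
          simp only [Fin.val_mk]
          omega
        · rw [hσeq, Equiv.swap_apply_of_ne_of_ne h1 h2]
  · rw [if_neg h, if_neg h]

lemma JM_succ {c m : ℕ} (hm : m + 1 < n) (hcm : c ≤ m) :
    JM n c (m + 1) =
      Lm (sw n m (m + 1)) * JM n c m * Lm (sw n m (m + 1)) + Lm (sw n m (m + 1)) := by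
  have hmn : m < n := lt_trans (Nat.lt_succ_self m) hm
  have hσ : sw n m (m + 1) = Equiv.swap ⟨m, hmn⟩ ⟨m + 1, hm⟩ := sw_eq hmn hm
  have hσinv : (sw n m (m + 1))⁻¹ = sw n m (m + 1) := sw_inv m (m + 1)
  have conj : ∀ i : Fin n, (i : ℕ) < m →
      sw n m (m + 1) * Equiv.swap i ⟨m, hmn⟩ * sw n m (m + 1) = Equiv.swap i ⟨m + 1, hm⟩ := by
    intro i hi
    have h1 : sw n m (m + 1) * Equiv.swap i ⟨m, hmn⟩ * (sw n m (m + 1))⁻¹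
        = Equiv.swap ((sw n m (m + 1)) i) ((sw n m (m + 1)) ⟨m, hmn⟩) :=
      (Equiv.swap_apply_apply _ _ _).symm
    rw [hσinv] at h1
    rw [h1, hσ]
    rw [Equiv.swap_apply_of_ne_of_ne
      (fun hc => by have := congrArg Fin.val hc; simp at this; omega)
      (fun hc => by have := congrArg Fin.val hc; simp at this; omega),
      Equiv.swap_apply_left]
  -- compute the conjugated middle term
  have hmid : Lm (sw n m (m + 1)) * JM n c m * Lm (sw n m (m + 1)) =
      ∑ i : Fin n, if c ≤ (i : ℕ) ∧ (i : ℕ) < m then Lm (sw n (i : ℕ) (m + 1)) else 0 := by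
    rw [JM_mul_left c m (Lm (sw n m (m + 1))), Finset.sum_mul]
    refine Finset.sum_congr rfl fun i _ => ?_
    simp only [ite_mul, zero_mul]
    by_cases h : c ≤ (i : ℕ) ∧ (i : ℕ) < m
    · rw [if_pos h, if_pos h, Lm_mul, Lm_mul, sw_eq i.2 hmn, Fin.eta,
        conj i h.2, sw_eq i.2 hm, Fin.eta]
    · rw [if_neg h, if_neg h]
  rw [hmid, JM]
  have split : ∀ i : Fin n,
      (if c ≤ (i : ℕ) ∧ (i : ℕ) < m + 1 then Lm (sw n (i : ℕ) (m + 1)) else 0)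
      = (if c ≤ (i : ℕ) ∧ (i : ℕ) < m then Lm (sw n (i : ℕ) (m + 1)) else 0)
        + (if i = ⟨m, hmn⟩ then Lm (sw n m (m + 1)) else 0) := by
    intro i
    by_cases h1 : c ≤ (i : ℕ) ∧ (i : ℕ) < m
    · rw [if_pos ⟨h1.1, by omega⟩, if_pos h1, if_neg, add_zero]
      exact fun hc => by have := congrArg Fin.val hc; simp at this; omega
    · by_cases h2 : i = (⟨m, hmn⟩ : Fin n)
      · subst h2
        rw [if_pos ⟨by simpa using hcm, by simp⟩, if_neg h1, if_pos rfl, zero_add]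
      · rw [if_neg, if_neg h1, if_neg h2, add_zero]
        intro hc
        apply h2
        have hvm : (i : ℕ) = m := by
          have := hc.2
          have h3 : ¬ ((i : ℕ) < m) := fun hlt => h1 ⟨hc.1, hlt⟩
          omega
        exact Fin.ext hvm
  rw [Finset.sum_congr rfl (fun i _ => split i), Finset.sum_add_distrib]
  congr 1
  rw [Finset.sum_ite_eq' Finset.univ (⟨m, hmn⟩ : Fin n) (fun _ => Lm (sw n m (m + 1)))]
  simp

end Perm2

section Perm3

open Equiv

variable {n : ℕ}

lemma JM_intSpec (c : ℕ) : ∀ j, j < n → IntSpec (JM n c j) := by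
  intro j
  induction j with
  | zero =>
    intro _
    rw [JM_eq_zero (Nat.zero_le c)]
    exact intSpec_zero
  | succ m ih =>
    intro hm1
    by_cases hcm : c ≤ m
    · have hmn : m < n := lt_trans (Nat.lt_succ_self m) hm1
      refine intSpec_step (JM_transpose c m) (JM_succ hm1 hcm) ?_ ?_ (ih hmn)
      · rw [Lm_mul, sw_mul_self, Lm_one]
      · exact JM_comm (Nat.le_succ m) hm1
    · rw [JM_eq_zero (by omega)]
      exact intSpec_zero

lemma swap_commute {a b c d : Fin n} (h1 : a ≠ c) (h2 : a ≠ d) (h3 : b ≠ c) (h4 : b ≠ d) :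
    Equiv.swap a b * Equiv.swap c d = Equiv.swap c d * Equiv.swap a b := by
  refine (Equiv.Perm.Disjoint.commute ?_).eq
  intro x
  by_cases hx1 : x = a
  · subst hx1
    right
    exact Equiv.swap_apply_of_ne_of_ne h1 h2
  · by_cases hx2 : x = b
    · subst hx2
      right
      exact Equiv.swap_apply_of_ne_of_ne h3 h4
    · left
      exact Equiv.swap_apply_of_ne_of_ne hx1 hx2

/-- JM elements with disjoint supports commute -/
lemma JM_comm_disj {c j c' j' : ℕ} (h : j < c') (hjn : j < n) (hj'n : j' < n) :
    JM n c j * JM n c' j' = JM n c' j' * JM n c j := by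
  rw [JM_mul_right c j (JM n c' j'), JM_mul_left c j (JM n c' j')]
  refine Finset.sum_congr rfl fun i _ => ?_
  by_cases h1 : c ≤ (i : ℕ) ∧ (i : ℕ) < j
  · rw [if_pos h1, if_pos h1, JM_mul_left c' j' (Lm (sw n (i : ℕ) j)),
      JM_mul_right c' j' (Lm (sw n (i : ℕ) j))]
    refine Finset.sum_congr rfl fun b _ => ?_
    by_cases h2 : c' ≤ (b : ℕ) ∧ (b : ℕ) < j'
    · rw [if_pos h2, if_pos h2, Lm_mul, Lm_mul, sw_eq i.2 hjn, sw_eq b.2 hj'n, Fin.eta, Fin.eta]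
      rw [swap_commute]
      · exact fun hc => by have := congrArg Fin.val hc; omega
      · exact fun hc => by have := congrArg Fin.val hc; simp at this; omega
      · exact fun hc => by have := congrArg Fin.val hc; simp at this; omega
      · exact fun hc => by have := congrArg Fin.val hc; simp at this; omega
    · rw [if_neg h2, if_neg h2]
  · rw [if_neg h1, if_neg h1]

/-- if `A` commutes with every `Lm g`, it commutes with every JM element -/
lemma JM_comm_of_central {A : Matrix (Perm (Fin n)) (Perm (Fin n)) ℝ}
    (hA : ∀ g : Perm (Fin n), Lm g * A = A * Lm g) (c j : ℕ) :
    JM n c j * A = A * JM n c j := by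
  rw [JM_mul_right c j A, JM_mul_left c j A]
  refine Finset.sum_congr rfl fun i _ => ?_
  split_ifs with h
  · rw [hA]
  · rfl

noncomputable def T2 (n : ℕ) : Matrix (Perm (Fin n)) (Perm (Fin n)) ℝ :=
  ∑ i : Fin n, ∑ j : Fin n, if i ≠ j then Lm (Equiv.swap i j) else 0

lemma T2_central (g : Perm (Fin n)) : Lm g * T2 n = T2 n * Lm g := by
  set F : Fin n → Fin n → Matrix (Perm (Fin n)) (Perm (Fin n)) ℝ :=
    fun a b => (if a ≠ b then Lm (Equiv.swap a b) else 0) * Lm g with hF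
  rw [T2, Finset.mul_sum, Finset.sum_mul]
  have key : ∀ i j : Fin n,
      (Lm g * if i ≠ j then Lm (Equiv.swap i j) else 0) = F (g i) (g j) := by
    intro i j
    rw [hF]
    by_cases h : i = j
    · subst h
      simp
    · simp only []
      rw [if_pos h, if_pos (fun hc => h (g.injective hc)), Lm_mul, Lm_mul,
        mul_swap_eq g i j]
  calc ∑ i : Fin n, Lm g * ∑ j : Fin n, (if i ≠ j then Lm (Equiv.swap i j) else 0)
      = ∑ i : Fin n, ∑ j : Fin n, F (g i) (g j) := by
        refine Finset.sum_congr rfl fun i _ => ?_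
        rw [Finset.mul_sum]
        exact Finset.sum_congr rfl fun j _ => key i j
    _ = ∑ i : Fin n, ∑ j : Fin n, F (g i) j := by
        refine Finset.sum_congr rfl fun i _ => ?_
        exact Equiv.sum_comp g (F (g i))
    _ = ∑ i : Fin n, ∑ j : Fin n, F i j :=
        Equiv.sum_comp g (fun a => ∑ j : Fin n, F a j)
    _ = ∑ i : Fin n, (∑ j : Fin n, if i ≠ j then Lm (Equiv.swap i j) else 0) * Lm g := by
        refine Finset.sum_congr rfl fun i _ => ?_
        rw [Finset.sum_mul]

noncomputable def TT (n : ℕ) : Matrix (Perm (Fin n)) (Perm (Fin n)) ℝ :=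
  ∑ j ∈ Finset.range n, JM n 0 j

lemma TT_alt : TT n = ∑ j : Fin n, ∑ i : Fin n, if i < j then Lm (Equiv.swap i j) else 0 := by
  rw [TT, ← Fin.sum_univ_eq_sum_range (fun j => JM n 0 j) n]
  refine Finset.sum_congr rfl fun j _ => ?_
  rw [JM]
  refine Finset.sum_congr rfl fun i _ => ?_
  have hcond : (0 ≤ (i : ℕ) ∧ (i : ℕ) < (j : ℕ)) ↔ i < j := by
    rw [Fin.lt_def]
    omega
  rw [if_congr hcond rfl rfl]
  split_ifs with h
  · rw [sw_coe]
  · rfl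

lemma T2_eq : T2 n = TT n + TT n := by
  have h1 : TT n = ∑ i : Fin n, ∑ j : Fin n, if i < j then Lm (Equiv.swap i j) else 0 := by
    rw [TT_alt]
    exact Finset.sum_comm
  have h2 : TT n = ∑ i : Fin n, ∑ j : Fin n, if j < i then Lm (Equiv.swap i j) else 0 := by
    rw [TT_alt]
    refine Finset.sum_congr rfl fun j _ => Finset.sum_congr rfl fun i _ => ?_
    split_ifs with h
    · rw [Equiv.swap_comm]
    · rfl
  rw [T2]
  nth_rewrite 1 [h1]
  nth_rewrite 1 [h2]
  rw [← Finset.sum_add_distrib]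
  refine Finset.sum_congr rfl fun i _ => ?_
  rw [← Finset.sum_add_distrib]
  refine Finset.sum_congr rfl fun j _ => ?_
  rcases lt_trichotomy i j with h | h | h
  · rw [if_pos (ne_of_lt h), if_pos h, if_neg (by omega), add_zero]
  · subst h
    simp
  · rw [if_pos (ne_of_gt h), if_neg (by omega), if_pos h, zero_add]

lemma TT_central (g : Perm (Fin n)) : Lm g * TT n = TT n * Lm g := by
  have h := T2_central g
  rw [T2_eq, Matrix.mul_add, Matrix.add_mul] at h
  have h2 : (2 : ℝ) • (Lm g * TT n) = (2 : ℝ) • (TT n * Lm g) := by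
    rw [two_smul, two_smul]
    exact h
  exact smul_right_injective _ (two_ne_zero) h2

end Perm3

section Final

open Equiv

variable {n k : ℕ}

noncomputable def PP (n k : ℕ) : Matrix (Perm (Fin n)) (Perm (Fin n)) ℝ :=
  ∑ j ∈ Finset.range k, JM n 0 j

noncomputable def QQ (n k : ℕ) : Matrix (Perm (Fin n)) (Perm (Fin n)) ℝ :=
  ∑ j ∈ Finset.range n, JM n k j

lemma TT_transpose : (TT n)ᵀ = TT n := by
  rw [TT, Matrix.transpose_sum]
  exact Finset.sum_congr rfl fun j _ => JM_transpose 0 j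

lemma PP_transpose : (PP n k)ᵀ = PP n k := by
  rw [PP, Matrix.transpose_sum]
  exact Finset.sum_congr rfl fun j _ => JM_transpose 0 j

lemma TT_intSpec : IntSpec (TT n) := by
  rw [TT]
  refine intSpec_sum _ _ (fun j _ => JM_transpose 0 j) (fun i hi j hj => ?_)
    (fun j hj => JM_intSpec 0 j (Finset.mem_range.mp hj))
  rcases le_total i j with h | h
  · exact JM_comm h (Finset.mem_range.mp hj)
  · exact (JM_comm h (Finset.mem_range.mp hi)).symm

lemma PP_intSpec (hkn : k < n) : IntSpec (PP n k) := by
  rw [PP]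
  refine intSpec_sum _ _ (fun j _ => JM_transpose 0 j) (fun i hi j hj => ?_)
    (fun j hj => JM_intSpec 0 j (lt_trans (Finset.mem_range.mp hj) hkn))
  rcases le_total i j with h | h
  · exact JM_comm h (lt_trans (Finset.mem_range.mp hj) hkn)
  · exact (JM_comm h (lt_trans (Finset.mem_range.mp hi) hkn)).symm

lemma QQ_intSpec : IntSpec (QQ n k) := by
  rw [QQ]
  refine intSpec_sum _ _ (fun j _ => JM_transpose k j) (fun i hi j hj => ?_)
    (fun j hj => JM_intSpec k j (Finset.mem_range.mp hj))
  rcases le_total i j with h | h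
  · exact JM_comm h (Finset.mem_range.mp hj)
  · exact (JM_comm h (Finset.mem_range.mp hi)).symm

lemma sum_mul_comm_of {ι κ : Type*} {s : Finset ι} {t : Finset κ}
    {f : ι → Matrix (Perm (Fin n)) (Perm (Fin n)) ℝ}
    {g : κ → Matrix (Perm (Fin n)) (Perm (Fin n)) ℝ}
    (H : ∀ i ∈ s, ∀ j ∈ t, f i * g j = g j * f i) :
    (∑ i ∈ s, f i) * (∑ j ∈ t, g j) = (∑ j ∈ t, g j) * (∑ i ∈ s, f i) := by
  calc (∑ i ∈ s, f i) * (∑ j ∈ t, g j)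
      = ∑ i ∈ s, ∑ j ∈ t, f i * g j := by
        rw [Finset.sum_mul]
        exact Finset.sum_congr rfl fun i _ => by rw [Finset.mul_sum]
    _ = ∑ i ∈ s, ∑ j ∈ t, g j * f i :=
        Finset.sum_congr rfl fun i hi => Finset.sum_congr rfl fun j hj => H i hi j hj
    _ = ∑ j ∈ t, ∑ i ∈ s, g j * f i := Finset.sum_comm
    _ = (∑ j ∈ t, g j) * (∑ i ∈ s, f i) := by
        rw [Finset.sum_mul]
        exact Finset.sum_congr rfl fun j _ => by rw [Finset.mul_sum]

lemma TT_PP_comm (hkn : k < n) : TT n * PP n k = PP n k * TT n := by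
  rw [TT, PP]
  refine sum_mul_comm_of fun i hi j hj => ?_
  rcases le_total i j with h | h
  · exact JM_comm h (lt_trans (Finset.mem_range.mp hj) hkn)
  · exact (JM_comm h (Finset.mem_range.mp hi)).symm

lemma PP_QQ_comm (hkn : k < n) : PP n k * QQ n k = QQ n k * PP n k := by
  rw [PP, QQ]
  refine sum_mul_comm_of fun i hi j hj => ?_
  exact JM_comm_disj (Finset.mem_range.mp hi) (lt_trans (Finset.mem_range.mp hi) hkn)
    (Finset.mem_range.mp hj)

lemma TT_QQ_comm : TT n * QQ n k = QQ n k * TT n := by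
  rw [QQ, Finset.mul_sum, Finset.sum_mul]
  exact Finset.sum_congr rfl fun j _ => (JM_comm_of_central TT_central k j).symm

lemma M_intSpec (hkn : k < n) : IntSpec (TT n - PP n k - QQ n k) := by
  have h1 : TT n - PP n k - QQ n k = (TT n + -(PP n k)) + -(QQ n k) := by
    rw [sub_eq_add_neg, sub_eq_add_neg]
  rw [h1]
  refine intSpec_add ?_ ?_ ?_ (intSpec_neg QQ_intSpec)
  · rw [Matrix.transpose_add, Matrix.transpose_neg, TT_transpose, PP_transpose]
  · rw [Matrix.add_mul, Matrix.mul_add]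
    simp only [Matrix.neg_mul, Matrix.mul_neg, neg_neg]
    rw [TT_QQ_comm, PP_QQ_comm hkn]
  · exact intSpec_add TT_transpose
      (by rw [Matrix.mul_neg, Matrix.neg_mul, TT_PP_comm hkn])
      TT_intSpec (intSpec_neg (PP_intSpec hkn))

lemma rel_iff {u v σ : Perm (Fin n)} (hσ : σ⁻¹ = σ) : v * u⁻¹ = σ ↔ u = σ * v := by
  constructor
  · intro h
    have h2 : σ = u * v⁻¹ := by
      rw [← hσ, ← h, _root_.mul_inv_rev, inv_inv]
    rw [h2, mul_assoc, inv_mul_cancel, mul_one]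
  · intro h
    subst h
    rw [_root_.mul_inv_rev, ← mul_assoc, mul_inv_cancel, one_mul, hσ]

lemma swap_eq_cases {x y a b : Fin n} (hxy : x ≠ y) (h : Equiv.swap x y = Equiv.swap a b) :
    (x = a ∧ y = b) ∨ (x = b ∧ y = a) := by
  have h1 : Equiv.swap a b x = y := by rw [← h, Equiv.swap_apply_left]
  by_cases hxa : x = a
  · subst hxa
    rw [Equiv.swap_apply_left] at h1
    exact Or.inl ⟨rfl, h1.symm⟩
  · by_cases hxb : x = b
    · subst hxb
      rw [Equiv.swap_apply_right] at h1
      exact Or.inr ⟨rfl, h1.symm⟩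
    · rw [Equiv.swap_apply_of_ne_of_ne hxa hxb] at h1
      exact absurd h1 hxy

lemma MM_eq (hkn : k < n) :
    TT n - PP n k - QQ n k = ∑ j ∈ Finset.Ico k n, (JM n 0 j - JM n k j) := by
  have e1 : TT n = PP n k + ∑ j ∈ Finset.Ico k n, JM n 0 j := by
    rw [TT, PP, Finset.range_eq_Ico,
      ← Finset.sum_Ico_consecutive _ (Nat.zero_le k) hkn.le, Finset.range_eq_Ico]
  have e2 : QQ n k = ∑ j ∈ Finset.Ico k n, JM n k j := by
    rw [QQ, Finset.range_eq_Ico, ← Finset.sum_Ico_consecutive _ (Nat.zero_le k) hkn.le]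
    have hz : ∑ j ∈ Finset.Ico 0 k, JM n k j = 0 :=
      Finset.sum_eq_zero fun j hj => JM_eq_zero (le_of_lt (Finset.mem_Ico.mp hj).2)
    rw [hz, zero_add]
  rw [e1, e2, add_sub_cancel_left, ← Finset.sum_sub_distrib]

lemma Lm_apply (g u v : Perm (Fin n)) : Lm g u v = if u = g * v then (1:ℝ) else 0 := rfl

lemma JM_diff_apply {j : ℕ} (hj : k ≤ j) (u v : Perm (Fin n)) :
    (JM n 0 j - JM n k j) u v =
    ∑ i : Fin n, (if (i : ℕ) < k then (if u = sw n (i : ℕ) j * v then (1:ℝ) else 0) else 0) := by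
  rw [Matrix.sub_apply, JM, JM, Matrix.sum_apply, Matrix.sum_apply, ← Finset.sum_sub_distrib]
  refine Finset.sum_congr rfl fun i _ => ?_
  by_cases h1 : (i : ℕ) < k
  · rw [if_pos h1, if_pos ⟨Nat.zero_le _, by omega⟩, if_neg (by omega), Matrix.zero_apply,
      sub_zero, Lm_apply]
  · rw [if_neg h1]
    by_cases h2 : (i : ℕ) < j
    · rw [if_pos ⟨Nat.zero_le _, h2⟩, if_pos ⟨by omega, h2⟩, sub_self]
    · rw [if_neg (by omega), if_neg (by omega), Matrix.zero_apply, sub_self]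

open scoped Classical in
lemma MM_apply (hkn : k < n) (u v : Perm (Fin n)) :
    (TT n - PP n k - QQ n k) u v =
    if (∃ a b : Fin n, (a : ℕ) < k ∧ k ≤ (b : ℕ) ∧ v * u⁻¹ = Equiv.swap a b) then (1:ℝ) else 0 := by
  rw [MM_eq hkn, Matrix.sum_apply]
  rw [Finset.sum_congr rfl (fun j hj => JM_diff_apply (Finset.mem_Ico.mp hj).1 u v)]
  by_cases h : ∃ a b : Fin n, (a : ℕ) < k ∧ k ≤ (b : ℕ) ∧ v * u⁻¹ = Equiv.swap a b
  · obtain ⟨a, b, ha, hb, hab⟩ := h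
    rw [if_pos ⟨a, b, ha, hb, hab⟩]
    have hu : u = Equiv.swap a b * v := (rel_iff (Equiv.swap_inv a b)).mp hab
    have hanb : (a : ℕ) < (b : ℕ) := by omega
    rw [Finset.sum_eq_single_of_mem (b : ℕ) (Finset.mem_Ico.mpr ⟨hb, b.2⟩) ?_]
    · rw [Finset.sum_eq_single_of_mem a (Finset.mem_univ a) ?_]
      · rw [if_pos ha, if_pos (by rw [sw_coe]; exact hu)]
      · intro i _ hia
        by_cases h1 : (i : ℕ) < k
        · rw [if_pos h1, if_neg]
          intro he
          have hswap : Equiv.swap i b = Equiv.swap a b := by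
            have : sw n (i : ℕ) (b : ℕ) = Equiv.swap a b :=
              mul_right_cancel (he.symm.trans hu)
            rwa [sw_coe] at this
          rcases swap_eq_cases (fun hc => by
            have := congrArg Fin.val hc; omega) hswap with ⟨h2, _⟩ | ⟨h2, _⟩
          · exact hia h2
          · have := congrArg Fin.val h2; omega
        · rw [if_neg h1]
    · intro j hjm hjb
      have hj2 := Finset.mem_Ico.mp hjm
      refine Finset.sum_eq_zero fun i _ => ?_
      by_cases h1 : (i : ℕ) < k
      · rw [if_pos h1, if_neg]
        intro he
        have hswap : Equiv.swap i (⟨j, hj2.2⟩ : Fin n) = Equiv.swap a b := by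
          have : sw n (i : ℕ) j = Equiv.swap a b := mul_right_cancel (he.symm.trans hu)
          rwa [sw_eq i.2 hj2.2, Fin.eta] at this
        rcases swap_eq_cases (fun hc => by
          have := congrArg Fin.val hc; simp at this; omega) hswap with ⟨_, h2⟩ | ⟨h2, _⟩
        · exact hjb (by have := congrArg Fin.val h2; simpa using this)
        · have := congrArg Fin.val h2; omega
      · rw [if_neg h1]
  · rw [if_neg h]
    refine Finset.sum_eq_zero fun j hj => Finset.sum_eq_zero fun i _ => ?_
    obtain ⟨hkj, hjn⟩ := Finset.mem_Ico.mp hj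
    by_cases h1 : (i : ℕ) < k
    · rw [if_pos h1, if_neg]
      intro he
      refine h ⟨i, ⟨j, hjn⟩, h1, by simpa using hkj, ?_⟩
      refine (rel_iff (Equiv.swap_inv _ _)).mpr ?_
      rwa [sw_eq i.2 hjn, Fin.eta] at he
    · rw [if_neg h1]

end Final

theorem stmt_11 {n k : ℕ} (hk : 1 ≤ k) (hkn : k < n)
    (Γ : SimpleGraph (Equiv.Perm (Fin n))) [DecidableRel Γ.Adj]
    (hΓ : ∀ u v : Equiv.Perm (Fin n), Γ.Adj u v ↔
      ∃ a b : Fin n, (a : ℕ) < k ∧ k ≤ (b : ℕ) ∧ v * u⁻¹ = Equiv.swap a b) :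
    ∀ μ ∈ spectrum ℝ (Γ.adjMatrix ℝ), ∃ m : ℤ, μ = m := by
  have hadj : Γ.adjMatrix ℝ = TT n - PP n k - QQ n k := by
    ext u v
    rw [SimpleGraph.adjMatrix_apply, MM_apply hkn u v]
    exact if_congr (hΓ u v) rfl rfl
  intro μ hμ
  rw [hadj] at hμ
  exact M_intSpec hkn μ hμ
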